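/- Let X ⊆ A^ℤ and Y ⊆ B^ℤ be two-sided subshifts, let φ' : X' → Y' be a topological conjugacy, and let s ∈ X be a fixed point of σ. Then the set sR is a finite subshift of Y, i.e. it is finite, closed, and σ-invariant. -/

import Mathlib

open Set

/-- The two-sided shift map on `A^ℤ`: `(tshift x) i = x (i+1)`. -/
def tshift {A : Type*} (x : ℤ → A) : ℤ → A := fun i => x (i + 1)

/-- A two-sided point is periodic if `σ^n x = x` for some `n ≥ 1`. -/
def TPeriodic {A : Type*} (x : ℤ → A) : Prop := ∃ n : ℕ, 1 ≤ n ∧ tshift^[n] x = x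

/-- `Aper X` is the set `X'` of aperiodic points of `X`. -/
def Aper {A : Type*} (X : Set (ℤ → A)) : Set (ℤ → A) := {x ∈ X | ¬ TPeriodic x}

/-- The word `w` occurs in `x` at position `i`. -/
def OccursAt {A : Type*} (w : List A) (x : ℤ → A) (i : ℤ) : Prop :=
  ∀ j : Fin w.length, x (i + (j : ℕ)) = w.get j

/-- The word `w` occurs somewhere in `x`. -/
def OccursIn {A : Type*} (w : List A) (x : ℤ → A) : Prop := ∃ i : ℤ, OccursAt w x i

/-- The word `w` occurs in some point of `X`. -/
def WordIn {A : Type*} (w : List A) (X : Set (ℤ → A)) : Prop := ∃ x ∈ X, OccursIn w x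

/-- `X` is a (two-sided) subshift: a closed shift-invariant subset of the full shift. -/
def IsSubshift {A : Type*} [TopologicalSpace A] (X : Set (ℤ → A)) : Prop :=
  IsClosed X ∧ tshift '' X = X

/-- `X` is an SFT: it is defined by forbidding a finite set of finite words. -/
def IsSFT {A : Type*} (X : Set (ℤ → A)) : Prop :=
  ∃ F : Set (List A), F.Finite ∧ X = {x | ∀ w ∈ F, ¬ OccursIn w x}

/-- `X` is transitive: any two words of its language can be joined by a connecting word. -/
def IsTransitiveShift {A : Type*} (X : Set (ℤ → A)) : Prop :=
  ∀ u v : List A, WordIn u X → WordIn v X → ∃ w : List A, WordIn (u ++ w ++ v) X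

/-- A map between subsets of full shifts is shift-commuting (wherever the shift stays
in the domain set, which is always the case for shift-invariant sets). -/
def ShiftCommuting2 {A B : Type*} {X : Set (ℤ → A)} {Y : Set (ℤ → B)} (f : X → Y) : Prop :=
  ∀ (x : X) (hx : tshift (x : ℤ → A) ∈ X),
    (f ⟨tshift (x : ℤ → A), hx⟩ : ℤ → B) = tshift (f x : ℤ → B)

/-- `φ : X → Y` restricts (in domain and codomain) to `φ' : X' → Y'`. -/
def RestrictsTo2 {A B : Type*} {X : Set (ℤ → A)} {Y : Set (ℤ → B)}
    (φ : X → Y) (φ' : Aper X → Aper Y) : Prop :=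
  ∀ (x : ℤ → A) (hx : x ∈ Aper X), (φ ⟨x, hx.1⟩ : ℤ → B) = (φ' ⟨x, hx⟩ : ℤ → B)


/-- The relation `R ⊆ X × Y`: the closure of the graph `{(x, φ'(x)) : x ∈ X'}`
(taken in the ambient product space; for closed `X`, `Y` this coincides with the
closure in `X × Y`). -/
def graphRel {A B : Type*} [TopologicalSpace A] [TopologicalSpace B]
    {X : Set (ℤ → A)} {Y : Set (ℤ → B)} (φ' : Aper X → Aper Y) :
    Set ((ℤ → A) × (ℤ → B)) :=
  closure {p | ∃ x : Aper X, p = ((x : ℤ → A), (φ' x : ℤ → B))}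

open Filter Topology

namespace S5

variable {A : Type*}

def tshiftInv (x : ℤ → A) : ℤ → A := fun i => x (i - 1)

lemma tshift_tshiftInv (x : ℤ → A) : tshift (tshiftInv x) = x := by
  funext i; simp [tshift, tshiftInv]

lemma tshiftInv_tshift (x : ℤ → A) : tshiftInv (tshift x) = x := by
  funext i; simp [tshift, tshiftInv]

lemma tshift_injective : Function.Injective (tshift : (ℤ → A) → (ℤ → A)) :=
  Function.LeftInverse.injective tshiftInv_tshift

lemma tshift_iterate (n : ℕ) (x : ℤ → A) : tshift^[n] x = fun i => x (i + n) := by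
  induction n with
  | zero => simp
  | succ n ih =>
    funext i
    rw [Function.iterate_succ_apply']
    show (tshift^[n] x) (i + 1) = x (i + (n+1 : ℕ))
    rw [ih]
    congr 1
    push_cast
    ring_nf

lemma tperiodic_tshift_iff (x : ℤ → A) : TPeriodic (tshift x) ↔ TPeriodic x := by
  constructor
  · rintro ⟨n, hn, h⟩
    refine ⟨n, hn, tshift_injective ?_⟩
    rw [← Function.iterate_succ_apply' tshift n x, Function.iterate_succ_apply tshift n x]
    exact h
  · rintro ⟨n, hn, h⟩
    refine ⟨n, hn, ?_⟩
    rw [← Function.iterate_succ_apply tshift n x, Function.iterate_succ_apply' tshift n x, h]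

lemma tperiodic_tshiftInv_iff (x : ℤ → A) : TPeriodic (tshiftInv x) ↔ TPeriodic x := by
  conv_rhs => rw [← tshift_tshiftInv x]
  rw [tperiodic_tshift_iff]

section Top
variable [TopologicalSpace A]

lemma continuous_tshift : Continuous (tshift : (ℤ → A) → (ℤ → A)) :=
  continuous_pi fun i => continuous_apply (i + 1)

lemma continuous_tshiftInv : Continuous (tshiftInv : (ℤ → A) → (ℤ → A)) :=
  continuous_pi fun i => continuous_apply (i - 1)

def tshiftHomeo : (ℤ → A) ≃ₜ (ℤ → A) where
  toFun := tshift
  invFun := tshiftInv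
  left_inv := tshiftInv_tshift
  right_inv := tshift_tshiftInv
  continuous_toFun := continuous_tshift
  continuous_invFun := continuous_tshiftInv

end Top

-- membership transfer under invariance
lemma tshift_mem {X : Set (ℤ → A)} (hX : tshift '' X = X) {x : ℤ → A} (hx : x ∈ X) :
    tshift x ∈ X := hX ▸ mem_image_of_mem _ hx

lemma mem_of_tshift_mem {X : Set (ℤ → A)} (hX : tshift '' X = X) {x : ℤ → A}
    (hx : tshift x ∈ X) : x ∈ X := by
  rw [← hX] at hx
  obtain ⟨x', hx', he⟩ := hx
  rwa [← tshift_injective he]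

lemma tshiftInv_mem {X : Set (ℤ → A)} (hX : tshift '' X = X) {x : ℤ → A} (hx : x ∈ X) :
    tshiftInv x ∈ X := by
  apply mem_of_tshift_mem hX
  rwa [tshift_tshiftInv]

lemma shiftZ_mem {X : Set (ℤ → A)} (hX : tshift '' X = X) {x : ℤ → A} (hx : x ∈ X) (d : ℤ) :
    (fun i => x (i + d)) ∈ X := by
  induction d using Int.induction_on with
  | zero => simpa using hx
  | succ d ih =>
    have := tshift_mem hX ih
    have he : tshift (fun i => x (i + d)) = fun i => x (i + (d + 1)) := by
      funext i; simp only [tshift]; congr 1; ring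
    rwa [he] at this
  | pred d ih =>
    have := tshiftInv_mem hX ih
    have he : tshiftInv (fun i => x (i + -d)) = fun i => x (i + (-d - 1)) := by
      funext i; simp only [tshiftInv]; congr 1; ring
    rwa [he] at this

lemma periodic_mul {w : ℤ → A} {p : ℕ} (h : tshift^[p] w = w) (k : ℕ) (i : ℤ) :
    w (i + (p * k : ℕ)) = w i := by
  induction k with
  | zero => simp
  | succ k ih =>
    have h1 : ∀ j : ℤ, w (j + p) = w j := by
      intro j
      conv_rhs => rw [← h]
      rw [tshift_iterate]
    have : (i + (p * (k+1) : ℕ) : ℤ) = (i + (p * k : ℕ)) + p := by push_cast; ring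
    rw [this, h1, ih]

end S5

namespace S5

/-- A closed, shift-invariant subset of a full shift over a finite alphabet all of whose
points are periodic is finite. -/
lemma finite_of_allPeriodic {B : Type*} [Fintype B] [TopologicalSpace B] [DiscreteTopology B]
    (S : Set (ℤ → B)) (hcl : IsClosed S) (hinv : tshift '' S = S)
    (hper : ∀ y ∈ S, TPeriodic y) : S.Finite := by
  by_contra hinf
  -- for every n there are two distinct points of S agreeing on [-n, n]
  have key : ∀ n : ℕ, ∃ a, a ∈ S ∧ ∃ b, b ∈ S ∧ a ≠ b ∧ ∀ i : ℤ, i.natAbs ≤ n → a i = b i := by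
    intro n
    by_contra h
    push_neg at h
    apply hinf
    apply Set.Finite.of_finite_image (f := fun (y : ℤ → B) (j : Fin (2*n+1)) => y ((j : ℤ) - n))
      (Set.toFinite _)
    intro p hp q hq hpq
    by_contra hne
    obtain ⟨i, hile, hidiff⟩ := h p hp q hq hne
    have h0 : (0 : ℤ) ≤ i + n := by omega
    have hlt : (i + n).toNat < 2*n+1 := by omega
    have := congrFun hpq ⟨(i + n).toNat, hlt⟩
    simp only at this
    have hcast : (((i + n).toNat : ℤ)) - n = i := by omega
    rw [hcast] at this
    exact hidiff this
  choose a haS b hbS hne hagree using key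
  -- minimal difference position
  have hd : ∀ n : ℕ, ∃ d : ℤ, a n d ≠ b n d ∧
      (∀ i : ℤ, i.natAbs < d.natAbs → a n i = b n i) ∧ (n : ℤ).natAbs < d.natAbs := by
    intro n
    have hne' : ∃ i, a n i ≠ b n i := by
      by_contra h
      push_neg at h
      exact hne n (funext h)
    set D : Set ℕ := {m : ℕ | ∃ i : ℤ, i.natAbs = m ∧ a n i ≠ b n i} with hD
    have hDne : D.Nonempty := by
      obtain ⟨i, hi⟩ := hne'
      exact ⟨i.natAbs, i, rfl, hi⟩
    obtain ⟨d, hdabs, hddiff⟩ := Nat.sInf_mem hDne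
    refine ⟨d, hddiff, ?_, ?_⟩
    · intro i hilt
      by_contra hid
      have : sInf D ≤ i.natAbs := Nat.sInf_le ⟨i, rfl, hid⟩
      omega
    · have : d.natAbs ≠ n := fun h => hddiff (hagree n d (by omega))
      rcases Nat.lt_or_ge n d.natAbs with h | h
      · simpa using h
      · exact absurd (hagree n d (by omega)) hddiff
  choose d hdne hdmin hdbig using hd
  simp only [Int.natAbs_natCast] at hdbig
  -- the shifted sequence and its cluster point
  set seq : ℕ → ((ℤ → B) × (ℤ → B)) × Bool :=
    fun n => (((fun i => a n (i + d n)), (fun i => b n (i + d n))), decide (0 ≤ d n)) with hseq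
  obtain ⟨z, hz⟩ := exists_clusterPt_of_compactSpace (Filter.map seq atTop)
  have hmemC : ∀ (C : Set (((ℤ → B) × (ℤ → B)) × Bool)), IsClosed C →
      (∀ᶠ n in atTop, seq n ∈ C) → z ∈ C := by
    intro C hC hev
    have h1 : Filter.map seq atTop ≤ 𝓟 C := le_principal_iff.2 (mem_map.2 hev)
    have h2 : ClusterPt z (𝓟 C) := hz.mono h1
    rw [← hC.closure_eq]
    exact mem_closure_iff_clusterPt.2 h2
  -- z components are in S
  have hw : z.1.1 ∈ S := by
    refine hmemC {w | w.1.1 ∈ S} (hcl.preimage (continuous_fst.comp continuous_fst))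
      (Eventually.of_forall fun n => ?_)
    exact shiftZ_mem hinv (haS n) (d n)
  have hu : z.1.2 ∈ S := by
    refine hmemC {w | w.1.2 ∈ S} (hcl.preimage (continuous_snd.comp continuous_fst))
      (Eventually.of_forall fun n => ?_)
    exact shiftZ_mem hinv (hbS n) (d n)
  -- z differs at 0
  have hdiff0 : z.1.1 0 ≠ z.1.2 0 := by
    have : z ∈ {w : ((ℤ → B) × (ℤ → B)) × Bool | w.1.1 0 ≠ w.1.2 0} := by
      refine hmemC _ ?_ (Eventually.of_forall fun n => ?_)
      · have hc : Continuous (fun w : ((ℤ → B) × (ℤ → B)) × Bool => (w.1.1 0, w.1.2 0)) := by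
          exact ((continuous_apply (0:ℤ)).comp (continuous_fst.comp continuous_fst)).prodMk
            (((continuous_apply (0:ℤ))).comp (continuous_snd.comp continuous_fst))
        exact (isClosed_discrete {p : B × B | p.1 ≠ p.2}).preimage hc
      · show a n (0 + d n) ≠ b n (0 + d n)
        rw [zero_add]
        exact hdne n
    exact this
  -- agreement on one side
  have hside : ∀ k : ℕ,
      (z.2 = true → z.1.1 (-(k:ℤ)-1) = z.1.2 (-(k:ℤ)-1)) ∧
      (z.2 = false → z.1.1 ((k:ℤ)+1) = z.1.2 ((k:ℤ)+1)) := by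
    intro k
    have : z ∈ {w : ((ℤ → B) × (ℤ → B)) × Bool |
        (w.2 = true → w.1.1 (-(k:ℤ)-1) = w.1.2 (-(k:ℤ)-1)) ∧
        (w.2 = false → w.1.1 ((k:ℤ)+1) = w.1.2 ((k:ℤ)+1))} := by
      refine hmemC _ ?_ ?_
      · have hc : Continuous (fun w : ((ℤ → B) × (ℤ → B)) × Bool =>
            ((w.1.1 (-(k:ℤ)-1), w.1.2 (-(k:ℤ)-1)), (w.1.1 ((k:ℤ)+1), w.1.2 ((k:ℤ)+1)), w.2)) := by
          fun_prop
        exact (isClosed_discrete {p : (B × B) × (B × B) × Bool |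
          (p.2.2 = true → p.1.1 = p.1.2) ∧ (p.2.2 = false → p.2.1.1 = p.2.1.2)}).preimage hc
      · filter_upwards [Filter.eventually_ge_atTop (k+1)] with n hn
        constructor
        · intro hb
          have hdn : 0 ≤ d n := by simpa [hseq] using hb
          show a n ((-(k:ℤ)-1) + d n) = b n ((-(k:ℤ)-1) + d n)
          apply hdmin
          have := hdbig n
          omega
        · intro hb
          have hdn : ¬ (0 ≤ d n) := by simpa [hseq] using hb
          show a n (((k:ℤ)+1) + d n) = b n (((k:ℤ)+1) + d n)
          apply hdmin
          have := hdbig n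
          omega
    exact this
  -- periodicity of the two limit points gives a contradiction
  obtain ⟨p, hp1, hpw⟩ := hper _ hw
  obtain ⟨q, hq1, hqu⟩ := hper _ hu
  set N : ℕ := p * q with hN
  have hN1 : 1 ≤ N := Nat.one_le_iff_ne_zero.2 (by positivity)
  cases hzb : z.2 with
  | true =>
    have hE := (hside (N-1)).1 hzb
    have hpos : (-(((N:ℕ)-1 : ℕ):ℤ)-1) = -(N:ℤ) := by omega
    rw [hpos] at hE
    have h1 : z.1.1 (-(N:ℤ) + (p * q : ℕ)) = z.1.1 (-(N:ℤ)) := periodic_mul hpw q _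
    have h2 : z.1.2 (-(N:ℤ) + (q * p : ℕ)) = z.1.2 (-(N:ℤ)) := periodic_mul hqu p _
    have e1 : (-(N:ℤ) + ((p * q : ℕ) : ℤ)) = 0 := by
      have : ((p*q : ℕ) : ℤ) = (N:ℤ) := by rw [hN]
      omega
    have e2 : (-(N:ℤ) + ((q * p : ℕ) : ℤ)) = 0 := by
      have : ((q*p : ℕ) : ℤ) = (N:ℤ) := by rw [hN]; push_cast; ring
      omega
    rw [e1] at h1
    rw [e2] at h2
    exact hdiff0 (h1.trans (hE.trans h2.symm))
  | false =>
    have hE := (hside (N-1)).2 hzb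
    have hpos : ((((N:ℕ)-1 : ℕ):ℤ)+1) = (N:ℤ) := by omega
    rw [hpos] at hE
    have h1 : z.1.1 (0 + (p * q : ℕ)) = z.1.1 0 := periodic_mul hpw q _
    have h2 : z.1.2 (0 + (q * p : ℕ)) = z.1.2 0 := periodic_mul hqu p _
    have e1 : ((0:ℤ) + ((p * q : ℕ) : ℤ)) = (N:ℤ) := by
      have : ((p*q : ℕ) : ℤ) = (N:ℤ) := by rw [hN]
      omega
    have e2 : ((0:ℤ) + ((q * p : ℕ) : ℤ)) = (N:ℤ) := by
      have : ((q*p : ℕ) : ℤ) = (N:ℤ) := by rw [hN]; push_cast; ring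
      omega
    rw [e1] at h1
    rw [e2] at h2
    exact hdiff0 (h1.symm.trans (hE.trans h2))

end S5

open S5 in
/-- If `s ∈ X` is a fixed point of the shift, then `sR` is a finite
subshift of `Y`: finite, closed and shift-invariant. -/
theorem statement5 {A B : Type*} [Fintype A] [TopologicalSpace A] [DiscreteTopology A]
    [Fintype B] [TopologicalSpace B] [DiscreteTopology B]
    (X : Set (ℤ → A)) (Y : Set (ℤ → B))
    (hX : IsSubshift X) (hY : IsSubshift Y)
    (φ' : Aper X ≃ₜ Aper Y) (hφ' : ShiftCommuting2 ⇑φ')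
    (s : ℤ → A) (hs : s ∈ X) (hfix : tshift s = s) :
    ({y ∈ Y | (s, y) ∈ graphRel ⇑φ'}).Finite ∧
    IsClosed {y ∈ Y | (s, y) ∈ graphRel ⇑φ'} ∧
    tshift '' {y ∈ Y | (s, y) ∈ graphRel ⇑φ'} = {y ∈ Y | (s, y) ∈ graphRel ⇑φ'} := by
  set G : Set ((ℤ → A) × (ℤ → B)) :=
    {p | ∃ x : Aper X, p = ((x : ℤ → A), (φ' x : ℤ → B))} with hGdef
  have hgr : graphRel ⇑φ' = closure G := rfl
  set R : Set ((ℤ → A) × (ℤ → B)) := closure G with hRdef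
  set Φ : ((ℤ → A) × (ℤ → B)) ≃ₜ ((ℤ → A) × (ℤ → B)) :=
    Homeomorph.prodCongr tshiftHomeo tshiftHomeo with hΦdef
  have hΦapp : ∀ p : (ℤ → A) × (ℤ → B), Φ p = (tshift p.1, tshift p.2) := fun p => rfl
  -- the graph is invariant
  have hG : Φ '' G = G := by
    apply Subset.antisymm
    · rintro _ ⟨_, ⟨x, rfl⟩, rfl⟩
      have hx : tshift (x : ℤ → A) ∈ Aper X :=
        ⟨tshift_mem hX.2 x.2.1, fun hp => x.2.2 ((tperiodic_tshift_iff _).1 hp)⟩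
      refine ⟨⟨tshift (x : ℤ → A), hx⟩, ?_⟩
      rw [hΦapp, hφ' x hx]
    · rintro _ ⟨x, rfl⟩
      have h1 : tshiftInv (x : ℤ → A) ∈ Aper X :=
        ⟨tshiftInv_mem hX.2 x.2.1, fun hp => x.2.2 ((tperiodic_tshiftInv_iff _).1 hp)⟩
      have h2 : tshift (tshiftInv (x : ℤ → A)) ∈ Aper X := by
        rw [tshift_tshiftInv]; exact x.2
      refine ⟨(tshiftInv (x : ℤ → A), (φ' ⟨tshiftInv (x : ℤ → A), h1⟩ : ℤ → B)),
        ⟨⟨tshiftInv (x : ℤ → A), h1⟩, rfl⟩, ?_⟩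
      rw [hΦapp]
      have h3 := hφ' ⟨tshiftInv (x : ℤ → A), h1⟩ h2
      have h4 : (⟨tshift (tshiftInv (x : ℤ → A)), h2⟩ : Aper X) = x :=
        Subtype.ext (tshift_tshiftInv _)
      rw [h4] at h3
      exact Prod.ext (tshift_tshiftInv _) h3.symm
  have hRinv : Φ '' R = R := by
    rw [hRdef, Φ.image_closure, hG]
  have hRiff : ∀ p : (ℤ → A) × (ℤ → B), p ∈ R ↔ Φ p ∈ R := by
    intro p
    constructor
    · intro h; rw [← hRinv]; exact mem_image_of_mem _ h
    · intro h
      rw [← hRinv] at h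
      obtain ⟨p', hp', he⟩ := h
      rwa [← Φ.injective he]
  set S : Set (ℤ → B) := {y ∈ Y | (s, y) ∈ graphRel ⇑φ'} with hSdef
  have hSmem : ∀ y, y ∈ S ↔ y ∈ Y ∧ (s, y) ∈ R := fun y => Iff.rfl
  -- invariance of S
  have hSinv : tshift '' S = S := by
    apply Subset.antisymm
    · rintro _ ⟨y, ⟨hyY, hyR⟩, rfl⟩
      refine ⟨tshift_mem hY.2 hyY, ?_⟩
      have := (hRiff (s, y)).1 hyR
      rwa [hΦapp, hfix] at this
    · rintro y ⟨hyY, hyR⟩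
      refine ⟨tshiftInv y, ⟨tshiftInv_mem hY.2 hyY, ?_⟩, tshift_tshiftInv y⟩
      apply (hRiff (s, tshiftInv y)).2
      rw [hΦapp]
      simpa [hfix, tshift_tshiftInv, hgr] using hyR
  -- closedness of S
  have hScl : IsClosed S := by
    have h1 : IsClosed ((fun y : ℤ → B => ((s, y) : (ℤ → A) × (ℤ → B))) ⁻¹' R) :=
      isClosed_closure.preimage (continuous_const.prodMk continuous_id)
    exact hY.1.inter h1
  -- every point of S is periodic
  have hSper : ∀ y ∈ S, TPeriodic y := by
    rintro y ⟨hyY, hyR⟩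
    by_contra hnp
    have hyA : y ∈ Aper Y := ⟨hyY, hnp⟩
    set x₀ : Aper X := φ'.symm ⟨y, hyA⟩ with hx₀
    have hsx : s = (x₀ : ℤ → A) := by
      by_contra hne2
      obtain ⟨U, V, hU, hV, hsU, hxV, hUV⟩ := t2_separation hne2
      have hcont : ContinuousAt (fun z : (Aper Y : Set (ℤ → B)) => (φ'.symm z : ℤ → A))
          ⟨y, hyA⟩ := (continuous_subtype_val.comp φ'.symm.continuous).continuousAt
      have h1 : (fun z : (Aper Y : Set (ℤ → B)) => (φ'.symm z : ℤ → A)) ⁻¹' V ∈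
          𝓝 (⟨y, hyA⟩ : (Aper Y : Set (ℤ → B))) := hcont (hV.mem_nhds hxV)
      obtain ⟨W, hW, hWsub⟩ := (mem_nhds_subtype (Aper Y) ⟨y, hyA⟩ _).1 h1
      have hne3 : ((U ×ˢ W) ∩ G).Nonempty :=
        mem_closure_iff_nhds.1 hyR _ (prod_mem_nhds (hU.mem_nhds hsU) hW)
      obtain ⟨_, ⟨hpU, hpW⟩, x, rfl⟩ := hne3
      have h5 : ((φ'.symm (φ' x)) : ℤ → A) ∈ V := hWsub hpW
      rw [Homeomorph.symm_apply_apply] at h5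
      exact (Set.disjoint_left.1 hUV hpU) h5
    have hsa : ¬ TPeriodic s := by rw [hsx]; exact x₀.2.2
    exact hsa ⟨1, le_refl 1, by simpa using hfix⟩
  exact ⟨finite_of_allPeriodic S hScl hSinv hSper, hScl, hSinv⟩
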